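/- The set of continuous self-maps of the Golomb space is an F_{σδ} subset of the Polish space ℕ^ℕ (with the product of discrete topologies). -/

import Mathlib

/-- The base of the Golomb topology: arithmetic progressions `{a + b*n : n ≥ 0}`
with coprime `a, b ≥ 1`, viewed inside the positive integers. -/
def golombBasis : Set (Set ℕ+) :=
  {S | ∃ a b : ℕ, 1 ≤ a ∧ 1 ≤ b ∧ Nat.Coprime a b ∧
    S = {x : ℕ+ | ∃ n : ℕ, (x : ℕ) = a + b * n}}

/-- The Golomb (relatively prime integer) topology on `ℕ+`. -/
instance golombTopology : TopologicalSpace ℕ+ :=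
  TopologicalSpace.generateFrom golombBasis

/-- The arithmetic-progression set. -/
def golombSet (a b : ℕ) : Set ℕ+ := {x : ℕ+ | ∃ n : ℕ, (x : ℕ) = a + b * n}

/-- The closed pieces: `i` encodes a triple `(a, b, x)` (a basic open set and a point),
`j = 0` means "`f x` is not in the set", `j = c ≥ 1` means "the progression `x + c*n`
is coprime and maps into the set". -/
def golombF (i j : ℕ) : Set (ℕ+ → ℕ+) :=
  let a := (Nat.unpair (Nat.unpair i).1).1
  let b := (Nat.unpair (Nat.unpair i).1).2
  let x : ℕ+ := ⟨(Nat.unpair i).2 + 1, Nat.succ_pos _⟩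
  if 1 ≤ a ∧ 1 ≤ b ∧ Nat.Coprime a b then
    if j = 0 then {f | f x ∉ golombSet a b}
    else if Nat.Coprime (x : ℕ) j then
      {f | ∀ n : ℕ, f ⟨(x : ℕ) + j * n, by positivity⟩ ∈ golombSet a b}
    else ∅
  else Set.univ

theorem golombF_evalClosed (x : ℕ+) (A : Set ℕ+) :
    @IsClosed (ℕ+ → ℕ+) (@Pi.topologicalSpace ℕ+ (fun _ => ℕ+) (fun _ => ⊥)) {f | f x ∈ A} := by
  letI : TopologicalSpace ℕ+ := ⊥
  haveI : DiscreteTopology ℕ+ := ⟨rfl⟩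
  exact IsClosed.preimage (continuous_apply x) (isClosed_discrete A)

theorem continuous_selfmaps_Fsigmadelta :
    ∃ F : ℕ → ℕ → Set (ℕ+ → ℕ+),
      (∀ i j, @IsClosed (ℕ+ → ℕ+) (@Pi.topologicalSpace ℕ+ (fun _ => ℕ+) (fun _ => ⊥)) (F i j)) ∧
      {f : ℕ+ → ℕ+ | Continuous f} = ⋂ i, ⋃ j, F i j := by
  refine ⟨golombF, ?_, ?_⟩
  · -- closedness
    intro i j
    letI : TopologicalSpace ℕ+ := ⊥
    unfold golombF
    simp only
    split_ifs with h1 h2 h3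
    · exact golombF_evalClosed _ (golombSet _ _)ᶜ
    · rw [Set.setOf_forall]
      exact isClosed_iInter fun n => golombF_evalClosed _ _
    · exact isClosed_empty
    · exact isClosed_univ
  · -- the set equality
    ext f
    simp only [Set.mem_setOf_eq, Set.mem_iInter, Set.mem_iUnion]
    constructor
    · intro hf i
      set a := (Nat.unpair (Nat.unpair i).1).1 with ha
      set b := (Nat.unpair (Nat.unpair i).1).2 with hb
      set x : ℕ+ := ⟨(Nat.unpair i).2 + 1, Nat.succ_pos _⟩ with hx
      by_cases hP : 1 ≤ a ∧ 1 ≤ b ∧ Nat.Coprime a b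
      · -- the set golombSet a b is basic open
        have hbasic : golombSet a b ∈ golombBasis :=
          ⟨a, b, hP.1, hP.2.1, hP.2.2, rfl⟩
        have hopen : IsOpen (golombSet a b) :=
          TopologicalSpace.GenerateOpen.basic _ hbasic
        by_cases hfx : f x ∈ golombSet a b
        · -- f x ∈ S : preimage is open, find a basic nbhd of x inside
          have hpre : IsOpen (f ⁻¹' golombSet a b) := hopen.preimage hf
          -- open sets in generated topology: induct to find basic set around x
          have key : ∀ U : Set ℕ+, TopologicalSpace.GenerateOpen golombBasis U →
              ∀ y : ℕ+, y ∈ U → ∃ c : ℕ, 1 ≤ c ∧ Nat.Coprime (y : ℕ) c ∧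
                ∀ n : ℕ, (⟨(y : ℕ) + c * n, by positivity⟩ : ℕ+) ∈ U := by
            intro U hU
            induction hU with
            | basic s hs =>
              intro y hy
              obtain ⟨a', b', ha', hb', hcop, rfl⟩ := hs
              obtain ⟨n₀, hn₀⟩ := hy
              refine ⟨b', hb', ?_, ?_⟩
              · rw [hn₀]; exact (Nat.coprime_add_mul_left_left a' b' n₀).2 hcop
              · intro n
                exact ⟨n₀ + n, by simp only [PNat.mk_coe]; rw [hn₀]; ring⟩
            | univ => intro y _; exact ⟨1, le_refl 1, Nat.coprime_one_right _,
                fun n => Set.mem_univ _⟩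
            | inter s t _ _ ihs iht =>
              intro y hy
              obtain ⟨c₁, hc₁, hcop₁, hmem₁⟩ := ihs y hy.1
              obtain ⟨c₂, hc₂, hcop₂, hmem₂⟩ := iht y hy.2
              refine ⟨c₁ * c₂, Nat.one_le_iff_ne_zero.2 (by positivity),
                Nat.Coprime.mul_right hcop₁ hcop₂, fun n => ⟨?_, ?_⟩⟩
              · have := hmem₁ (c₂ * n)
                convert this using 2
                ring_nf
                exact Iff.rfl
              · have := hmem₂ (c₁ * n)
                convert this using 2
                ring_nf
                exact Iff.rfl
            | sUnion S _ ih =>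
              intro y hy
              obtain ⟨s, hs, hys⟩ := hy
              obtain ⟨c, hc, hcop, hmem⟩ := ih s hs y hys
              exact ⟨c, hc, hcop, fun n => ⟨s, hs, hmem n⟩⟩
          obtain ⟨c, hc, hcop, hmem⟩ := key _ hpre x hfx
          refine ⟨c, ?_⟩
          unfold golombF
          simp only [if_pos (show 1 ≤ (Nat.unpair (Nat.unpair i).1).1 ∧ 1 ≤ (Nat.unpair (Nat.unpair i).1).2 ∧ Nat.Coprime (Nat.unpair (Nat.unpair i).1).1 (Nat.unpair (Nat.unpair i).1).2 from hP)]
          rw [if_neg (by omega)]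
          split_ifs with hh
          exact fun n => hmem n
          exact absurd hcop hh
        · refine ⟨0, ?_⟩
          unfold golombF
          simp only [if_pos (show 1 ≤ (Nat.unpair (Nat.unpair i).1).1 ∧ 1 ≤ (Nat.unpair (Nat.unpair i).1).2 ∧ Nat.Coprime (Nat.unpair (Nat.unpair i).1).1 (Nat.unpair (Nat.unpair i).1).2 from hP), if_pos rfl]
          exact hfx
      · exact ⟨0, by unfold golombF; simp only [if_neg (show ¬(1 ≤ (Nat.unpair (Nat.unpair i).1).1 ∧ 1 ≤ (Nat.unpair (Nat.unpair i).1).2 ∧ Nat.Coprime (Nat.unpair (Nat.unpair i).1).1 (Nat.unpair (Nat.unpair i).1).2) from hP)]; trivial⟩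
    · -- converse: f in all F's implies continuous
      intro hF
      rw [show (golombTopology : TopologicalSpace ℕ+) =
        TopologicalSpace.generateFrom golombBasis from rfl] at *
      rw [continuous_generateFrom_iff]
      rintro s ⟨a, b, ha, hb, hcop, rfl⟩
      rw [isOpen_iff_forall_mem_open]
      intro x hx
      -- encode (a, b, x) into i
      set i := Nat.pair (Nat.pair a b) ((x : ℕ) - 1) with hi
      have hdec1 : (Nat.unpair (Nat.unpair i).1).1 = a := by
        simp [hi, Nat.unpair_pair]
      have hdec2 : (Nat.unpair (Nat.unpair i).1).2 = b := by
        simp [hi, Nat.unpair_pair]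
      have hdec3 : (⟨(Nat.unpair i).2 + 1, Nat.succ_pos _⟩ : ℕ+) = x := by
        have h1 : (Nat.unpair i).2 = (x : ℕ) - 1 := by simp [hi]
        apply PNat.coe_injective
        simp only [PNat.mk_coe, h1]
        exact Nat.succ_pred_eq_of_pos x.2
      obtain ⟨j, hj⟩ := hF i
      unfold golombF at hj
      simp only [hdec1, hdec2, hdec3] at hj
      rw [if_pos ⟨ha, hb, hcop⟩] at hj
      rcases eq_or_ne j 0 with hj0 | hj0
      · rw [if_pos hj0] at hj
        exact absurd hx hj
      · rw [if_neg hj0] at hj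
        by_cases hcopx : Nat.Coprime (x : ℕ) j
        · rw [if_pos hcopx] at hj
          -- the basic set {y | ∃ n, y = x + j*n}
          refine ⟨{y : ℕ+ | ∃ n : ℕ, (y : ℕ) = (x : ℕ) + j * n}, ?_, ?_, ⟨0, by simp⟩⟩
          · rintro y ⟨n, hn⟩
            have := hj n
            have hy : y = (⟨(x : ℕ) + j * n, by positivity⟩ : ℕ+) :=
              PNat.coe_injective (by simpa using hn)
            rw [Set.mem_preimage]
            rw [hy]
            exact this
          · exact TopologicalSpace.GenerateOpen.basic _
              ⟨(x : ℕ), j, x.2, Nat.one_le_iff_ne_zero.2 hj0, hcopx, rfl⟩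
        · rw [if_neg hcopx] at hj
          exact absurd hj (Set.notMem_empty f)
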